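/- Let ω > 0, ρₓ ≥ 0, and ζ > 0 with 2ζ² ≤ 1. Put q = 1 + ρₓω² and α = 4ω⁴ζ²(1−ζ²)/q, and define A = [[0,1],[−ω², −2ζω]] and P = (2ζω/α)·[[ω², ζω],[ζω, 1]]. Then P is symmetric positive definite and satisfies the algebraic Riccati equation P A + Aᵀ P + α · P [[0,0],[0,1]] P + [[q,0],[0,0]] = 0. -/

import Mathlib

open Matrix

/-- Appendix A, underdamped case 2ζ² ≤ 1: explicit positive definite solution
of the per-mode bounded-real-lemma Riccati equation with the maximal α. -/
theorem stmt_4 (ω ρx ζ : ℝ) (hω : 0 < ω) (hρx : 0 ≤ ρx) (hζ : 0 < ζ)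
    (hζ2 : 2 * ζ ^ 2 ≤ 1)
    (q α : ℝ) (hq : q = 1 + ρx * ω ^ 2) (hα : α = 4 * ω ^ 4 * ζ ^ 2 * (1 - ζ ^ 2) / q)
    (A P : Matrix (Fin 2) (Fin 2) ℝ)
    (hA : A = !![0, 1; -ω ^ 2, -(2 * ζ * ω)])
    (hP : P = (2 * ζ * ω / α) • !![ω ^ 2, ζ * ω; ζ * ω, 1]) :
    P.IsSymm ∧ P.PosDef ∧
      P * A + Aᵀ * P + α • (P * !![0, 0; 0, 1] * P) + !![q, 0; 0, 0] = 0 := by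
  have hζ1 : 0 < 1 - ζ ^ 2 := by nlinarith
  have hq0 : 0 < q := by nlinarith
  have hα0 : 0 < α := by
    rw [hα]
    apply div_pos _ hq0
    exact mul_pos (mul_pos (mul_pos (by norm_num) (pow_pos hω 4)) (pow_pos hζ 2)) hζ1
  have hc : 0 < 2 * ζ * ω / α := by positivity
  refine ⟨?_, ?_, ?_⟩
  · rw [hP]
    ext i j
    fin_cases i <;> fin_cases j <;> simp [Matrix.transpose_apply]
  · rw [hP]
    refine posDef_iff_dotProduct_mulVec.mpr ⟨?_, ?_⟩
    · ext i j
      fin_cases i <;> fin_cases j <;>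
        simp [Matrix.conjTranspose_apply]
    · intro x hx
      have hx' : x 0 ≠ 0 ∨ x 1 ≠ 0 := by
        by_contra h
        push_neg at h
        apply hx
        ext i; fin_cases i <;> simp [h.1, h.2]
      simp only [smul_mulVec, dotProduct, mulVec, Fin.sum_univ_two,
        Matrix.smul_apply, Matrix.cons_val', Matrix.cons_val_zero,
        Matrix.cons_val_one, Matrix.head_cons, Matrix.head_fin_const,
        Matrix.empty_val', Matrix.cons_val_fin_one, Matrix.of_apply,
        Matrix.cons_val_zero, Pi.smul_apply, smul_eq_mul, star_trivial,
        RCLike.star_def]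
      have key : 0 < x 0 * (ω ^ 2 * x 0 + ζ * ω * x 1) +
          x 1 * (ζ * ω * x 0 + 1 * x 1) := by
        have h1 : x 0 * (ω ^ 2 * x 0 + ζ * ω * x 1) + x 1 * (ζ * ω * x 0 + 1 * x 1)
            = (ω * x 0 + ζ * x 1) ^ 2 + (1 - ζ ^ 2) * x 1 ^ 2 := by ring
        rw [h1]
        rcases eq_or_ne (x 1) 0 with h1' | h1'
        · have h0 : x 0 ≠ 0 := by
            rcases hx' with h | h
            · exact h
            · exact absurd h1' h
          have h2 : ω * x 0 + ζ * x 1 ≠ 0 := by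
            rw [h1']; simpa using mul_ne_zero hω.ne' h0
          have h3 : 0 < (ω * x 0 + ζ * x 1) ^ 2 := by positivity
          nlinarith [sq_nonneg (x 1)]
        · have h3 : 0 < (1 - ζ ^ 2) * x 1 ^ 2 := by positivity
          nlinarith [sq_nonneg (ω * x 0 + ζ * x 1)]
      have := mul_pos hc key
      -- goal should match up to ring normalization
      nlinarith [this]
  · have hqne : q ≠ 0 := hq0.ne'
    have hαne : α ≠ 0 := hα0.ne'
    have hkey : α * q = 4 * ω ^ 4 * ζ ^ 2 * (1 - ζ ^ 2) := by
      rw [hα]; field_simp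
    subst hP hA
    ext i j
    fin_cases i <;> fin_cases j <;>
      · simp [Matrix.mul_apply, Fin.sum_univ_two, Matrix.vecHead, Matrix.vecTail]
        field_simp
        first
        | linear_combination α * hkey
        | linear_combination (-α) * hkey
        | linear_combination hkey
        | ring
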